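/- Let α ∈ (0,1) and let ψ be the one-sided stable probability distribution of exponent α, i.e., the probability measure on [0,∞) whose characteristic function is φ(ξ) = exp(−|ξ|^α (1 − i·tan(πα/2)·sgn(ξ))). Let θ : ℕ → (0,∞) satisfy θ_n / n^{1/α} → 0 as n → ∞. Then for every integer k ≥ 2 and every real t > 0, lim_{n→∞} f(k, n, t·θ_n) = 1. -/

import Mathlib

open MeasureTheory Real Filter Topology

/-- `j`-fold convolution power of a measure on ℝ, with `convPow ψ 0 = δ₀`. -/
noncomputable def convPow (ψ : Measure ℝ) : ℕ → Measure ℝ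
  | 0 => Measure.dirac 0
  | (j + 1) => ((convPow ψ j).prod ψ).map (fun p => p.1 + p.2)

/-- `f(k, n, s) = Σ_{j=0}^∞ (1 − k/n)^j ∫_{[0,s]} ψ((s−u, ∞)) ψ^{*j}(du)`. -/
noncomputable def pauseF (ψ : Measure ℝ) (k n : ℕ) (s : ℝ) : ℝ :=
  ∑' j : ℕ, (1 - (k : ℝ) / n) ^ j *
    ∫ u in Set.Icc (0 : ℝ) s, (ψ (Set.Ioi (s - u))).toReal ∂(convPow ψ j)

/-- characteristic function `φ(ξ) = ∫ e^{iξx} ψ(dx)`. -/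
noncomputable def charFn (ψ : Measure ℝ) (ξ : ℝ) : ℂ :=
  ∫ x, Complex.exp (Complex.I * ξ * x) ∂ψ


section Aux
open intervalIntegral Set

variable (ψ : Measure ℝ) [IsProbabilityMeasure ψ]

instance convPow_prob : ∀ j, IsProbabilityMeasure (convPow ψ j)
  | 0 => by unfold convPow; infer_instance
  | (j+1) => by
      have := convPow_prob j
      unfold convPow
      exact Measure.isProbabilityMeasure_map (by fun_prop)

lemma convPow_neg (hsupp : ψ (Set.Iio 0) = 0) : ∀ j, convPow ψ j (Set.Iio 0) = 0
  | 0 => by simp [convPow]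
  | (j+1) => by
      have ih := convPow_neg hsupp j
      unfold convPow
      rw [Measure.map_apply (by fun_prop) measurableSet_Iio]
      have hsub : (fun p : ℝ × ℝ => p.1 + p.2) ⁻¹' (Set.Iio 0) ⊆
          (Set.Iio 0 ×ˢ Set.univ) ∪ (Set.univ ×ˢ Set.Iio 0) := by
        rintro ⟨x, y⟩ h
        simp only [Set.mem_preimage, Set.mem_Iio] at h
        rcases lt_or_ge x 0 with hx | hx
        · exact Or.inl ⟨hx, trivial⟩
        · exact Or.inr ⟨trivial, by simp only [Set.mem_Iio]; linarith⟩
      refine le_antisymm ?_ zero_le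
      calc ((convPow ψ j).prod ψ) ((fun p : ℝ × ℝ => p.1 + p.2) ⁻¹' (Set.Iio 0))
          ≤ ((convPow ψ j).prod ψ) ((Set.Iio 0 ×ˢ Set.univ) ∪ (Set.univ ×ˢ Set.Iio 0)) :=
            measure_mono hsub
        _ ≤ _ + _ := measure_union_le _ _
        _ = 0 := by
            rw [Measure.prod_prod, Measure.prod_prod, ih, hsupp]
            simp

lemma charFn_convPow (ξ : ℝ) : ∀ j, charFn (convPow ψ j) ξ = (charFn ψ ξ) ^ j
  | 0 => by
      simp [charFn, convPow, integral_dirac]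
  | (j+1) => by
      have ih := charFn_convPow ξ j
      have : IsProbabilityMeasure (convPow ψ j) := convPow_prob ψ j
      unfold convPow
      rw [pow_succ, ← ih]
      unfold charFn
      rw [integral_map (by fun_prop)
        (Measurable.aestronglyMeasurable (by
          exact Complex.measurable_exp.comp (by fun_prop)))]
      simp only [Complex.ofReal_add]
      have heq : (fun p : ℝ × ℝ => Complex.exp (Complex.I * ξ * (p.1 + p.2))) =
          fun p : ℝ × ℝ => Complex.exp (Complex.I * ξ * p.1) * Complex.exp (Complex.I * ξ * p.2) := by
        funext p; rw [← Complex.exp_add]; ring_nf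
      calc ∫ p : ℝ × ℝ, Complex.exp (Complex.I * ξ * (p.1 + p.2)) ∂(convPow ψ j).prod ψ
          = ∫ p : ℝ × ℝ, Complex.exp (Complex.I * ξ * p.1) * Complex.exp (Complex.I * ξ * p.2)
            ∂(convPow ψ j).prod ψ := by rw [heq]
        _ = _ := integral_prod_mul (fun x : ℝ => Complex.exp (Complex.I * ξ * x)) (fun x : ℝ => Complex.exp (Complex.I * ξ * x))

lemma meas_tail : Measurable (fun u : ℝ => ψ (Set.Ioi (u))) := by
  have h : MeasurableSet {p : ℝ × ℝ | p.1 < p.2} := measurableSet_lt measurable_fst measurable_snd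
  have := measurable_measure_prodMk_left (ν := ψ) h
  convert this using 2 with u
  rfl

lemma meas_head : Measurable (fun u : ℝ => ψ (Set.Iic (u))) := by
  have h : MeasurableSet {p : ℝ × ℝ | p.2 ≤ p.1} := measurableSet_le measurable_snd measurable_fst
  have := measurable_measure_prodMk_left (ν := ψ) h
  convert this using 2 with u
  rfl

lemma lemmaA (hsupp : ψ (Set.Iio 0) = 0) (j : ℕ) (s : ℝ) (hs : 0 ≤ s)
    (hnegj : convPow ψ j (Set.Iio 0) = 0) :
    ∫ u in Set.Icc (0 : ℝ) s, (ψ (Set.Ioi (s - u))).toReal ∂(convPow ψ j)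
      = (convPow ψ j (Set.Iic s)).toReal - (convPow ψ (j+1) (Set.Iic s)).toReal := by
  have : IsProbabilityMeasure (convPow ψ j) := convPow_prob ψ j
  set ν := convPow ψ j with hν
  have hpsi_le_one : ∀ a : ℝ, ψ (Set.Iic a) ≤ 1 := fun a => prob_le_one
  -- step 1
  have h1 : convPow ψ (j+1) (Set.Iic s) = ∫⁻ u, ψ (Set.Iic (s - u)) ∂ν := by
    show (Measure.map (fun p : ℝ × ℝ => p.1 + p.2) (ν.prod ψ)) (Set.Iic s) = _
    rw [Measure.map_apply (by fun_prop) measurableSet_Iic]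
    have hms : MeasurableSet ((fun p : ℝ × ℝ => p.1 + p.2) ⁻¹' Set.Iic s) :=
      (by fun_prop : Measurable fun p : ℝ × ℝ => p.1 + p.2) measurableSet_Iic
    rw [Measure.prod_apply hms]
    congr 1
    funext u
    congr 1
    ext y
    simp only [Set.mem_preimage, Set.mem_Iic]
    constructor <;> intro h <;> linarith
  -- step 2 : integral over complement vanishes
  have h2 : ∫⁻ u, ψ (Set.Iic (s - u)) ∂ν = ∫⁻ u in Set.Icc 0 s, ψ (Set.Iic (s - u)) ∂ν := by
    have hmeas : Measurable (fun u : ℝ => ψ (Set.Iic (s - u))) :=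
      (meas_head ψ).comp (by fun_prop)
    rw [← lintegral_add_compl (fun u => ψ (Set.Iic (s - u))) (measurableSet_Icc (a := (0:ℝ)) (b := s))]
    have hcompl : ∫⁻ u in (Set.Icc (0:ℝ) s)ᶜ, ψ (Set.Iic (s - u)) ∂ν = 0 := by
      have hsplit : (Set.Icc (0:ℝ) s)ᶜ ⊆ Set.Iio 0 ∪ Set.Ioi s := by
        intro u hu
        simp only [Set.mem_compl_iff, Set.mem_Icc, not_and_or, not_le] at hu
        rcases hu with h | h
        · exact Or.inl h
        · exact Or.inr h
      refine le_antisymm ?_ zero_le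
      calc ∫⁻ u in (Set.Icc (0:ℝ) s)ᶜ, ψ (Set.Iic (s - u)) ∂ν
          ≤ ∫⁻ u in Set.Iio 0 ∪ Set.Ioi s, ψ (Set.Iic (s - u)) ∂ν := by
            exact lintegral_mono_set hsplit
        _ ≤ (∫⁻ u in Set.Iio 0, ψ (Set.Iic (s - u)) ∂ν)
            + ∫⁻ u in Set.Ioi s, ψ (Set.Iic (s - u)) ∂ν := lintegral_union_le _ _ _
        _ ≤ 0 + 0 := by
            gcongr
            · calc ∫⁻ u in Set.Iio 0, ψ (Set.Iic (s - u)) ∂ν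
                  ≤ ∫⁻ _ in Set.Iio 0, 1 ∂ν := lintegral_mono fun u => hpsi_le_one _
                _ = ν (Set.Iio 0) := by simp
                _ = 0 := hnegj
            · have : ∀ u ∈ Set.Ioi s, ψ (Set.Iic (s - u)) = 0 := by
                intro u hu
                refine le_antisymm ?_ zero_le
                calc ψ (Set.Iic (s - u)) ≤ ψ (Set.Iio 0) := by
                      refine measure_mono fun y hy => ?_
                      simp only [Set.mem_Iic] at hy
                      simp only [Set.mem_Iio]
                      have : u > s := hu
                      linarith
                  _ = 0 := hsupp
              rw [setLIntegral_congr_fun measurableSet_Ioi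
                this]
              simp
        _ = 0 := by simp
    rw [hcompl, add_zero]
  -- step 3
  have h3 : (∫⁻ u in Set.Icc (0:ℝ) s, ψ (Set.Ioi (s - u)) ∂ν)
      + ∫⁻ u in Set.Icc (0:ℝ) s, ψ (Set.Iic (s - u)) ∂ν = ν (Set.Icc 0 s) := by
    have hm : Measurable fun u : ℝ => ψ (Set.Ioi (s - u)) :=
      (meas_tail ψ).comp (by fun_prop)
    rw [← lintegral_add_left hm]
    have : ∀ u : ℝ, ψ (Set.Ioi (s - u)) + ψ (Set.Iic (s - u)) = 1 := by
      intro u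
      have : Set.Ioi (s-u) = (Set.Iic (s-u))ᶜ := by ext y; simp
      rw [this, add_comm, measure_add_measure_compl measurableSet_Iic, measure_univ]
    simp_rw [this]
    simp
  -- step 4
  have h4 : ν (Set.Icc 0 s) = ν (Set.Iic s) := by
    refine le_antisymm (measure_mono fun x hx => hx.2) ?_
    calc ν (Set.Iic s) ≤ ν (Set.Iio 0 ∪ Set.Icc 0 s) := by
          refine measure_mono fun x hx => ?_
          rcases lt_or_ge x 0 with h | h
          · exact Or.inl h
          · exact Or.inr ⟨h, hx⟩
      _ ≤ ν (Set.Iio 0) + ν (Set.Icc 0 s) := measure_union_le _ _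
      _ = ν (Set.Icc 0 s) := by rw [hnegj, zero_add]
  -- combine in ENNReal then pass to real
  have htail : ∫⁻ u in Set.Icc (0:ℝ) s, ψ (Set.Ioi (s - u)) ∂ν
      = ν (Set.Iic s) - convPow ψ (j+1) (Set.Iic s) := by
    rw [h1, h2, ← h4, ← h3]
    rw [ENNReal.add_sub_cancel_right]
    exact ne_top_of_le_ne_top (measure_ne_top ν _) (by
      calc ∫⁻ u in Set.Icc (0:ℝ) s, ψ (Set.Iic (s - u)) ∂ν
          ≤ ∫⁻ _ in Set.Icc (0:ℝ) s, 1 ∂ν := lintegral_mono fun u => hpsi_le_one _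
        _ = ν (Set.Icc 0 s) := by simp
        _ ≤ ν Set.univ := measure_mono (Set.subset_univ _))
  have hint : ∫ u in Set.Icc (0 : ℝ) s, (ψ (Set.Ioi (s - u))).toReal ∂ν
      = (∫⁻ u in Set.Icc (0:ℝ) s, ψ (Set.Ioi (s - u)) ∂ν).toReal := by
    rw [integral_toReal]
    · exact (((meas_tail ψ).comp (by fun_prop : Measurable fun u : ℝ => s - u))).aemeasurable
    · exact Filter.Eventually.of_forall fun u => lt_of_le_of_lt prob_le_one ENNReal.one_lt_top
  rw [hint, htail, ENNReal.toReal_sub_of_le ?hle (measure_ne_top _ _)]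
  case hle =>
    have h5 : convPow ψ (j+1) (Set.Iic s) ≤ ν (Set.Icc 0 s) := by
      rw [h1, h2]
      calc ∫⁻ u in Set.Icc (0:ℝ) s, ψ (Set.Iic (s - u)) ∂ν
          ≤ ∫⁻ _ in Set.Icc (0:ℝ) s, 1 ∂ν := lintegral_mono fun u => hpsi_le_one _
        _ = ν (Set.Icc 0 s) := by simp
    rw [← h4]; exact h5

lemma kernel_cont (T u : ℝ) : Continuous fun ξ : ℝ => (1 - ξ/T) * Real.cos (ξ*u) := by
  fun_prop

lemma kernel_eq {T u : ℝ} (hT : 0 < T) (hu : u ≠ 0) :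
    ∫ ξ in Set.Ioc 0 T, (1 - ξ/T) * Real.cos (ξ*u) = (1 - Real.cos (T*u))/(T*u^2) := by
  rw [← intervalIntegral.integral_of_le hT.le]
  have hderiv : ∀ ξ ∈ Set.uIcc (0:ℝ) T,
      HasDerivAt (fun ξ : ℝ => (1 - ξ/T) * (Real.sin (ξ*u)/u) - Real.cos (ξ*u)/(T*u^2))
        ((1 - ξ/T) * Real.cos (ξ*u)) ξ := by
    intro ξ _
    have h1 : HasDerivAt (fun ξ : ℝ => 1 - ξ/T) (-(1/T)) ξ := by
      simpa using ((hasDerivAt_id ξ).div_const T).const_sub 1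
    have h2 : HasDerivAt (fun ξ : ℝ => Real.sin (ξ*u)) (Real.cos (ξ*u) * u) ξ := by
      exact (Real.hasDerivAt_sin (ξ*u)).comp ξ (hasDerivAt_mul_const u)
    have h3 : HasDerivAt (fun ξ : ℝ => Real.cos (ξ*u)) (-Real.sin (ξ*u) * u) ξ := by
      exact (Real.hasDerivAt_cos (ξ*u)).comp ξ (hasDerivAt_mul_const u)
    have := (h1.mul (h2.div_const u)).sub ((h3.div_const (T*u^2)))
    refine HasDerivAt.congr_deriv this ?_
    field_simp
    ring
  rw [intervalIntegral.integral_eq_sub_of_hasDerivAt hderiv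
    ((kernel_cont T u).intervalIntegrable 0 T)]
  field_simp
  simp only [sub_self, sub_zero, mul_zero, zero_mul, Real.sin_zero, Real.cos_zero]; ring

lemma kernel_zero {T : ℝ} (hT : 0 < T) :
    ∫ ξ in Set.Ioc 0 T, (1 - ξ/T) * Real.cos (ξ*0) = T/2 := by
  rw [← intervalIntegral.integral_of_le hT.le]
  simp only [mul_zero, Real.cos_zero, mul_one]
  rw [intervalIntegral.integral_sub intervalIntegrable_const
    ((by fun_prop : Continuous fun x : ℝ => x / T).intervalIntegrable 0 T)]
  simp only [intervalIntegral.integral_const, smul_eq_mul, mul_one, sub_zero]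
  rw [intervalIntegral.integral_div, integral_id]
  field_simp
  ring

lemma kernel_nonneg {T u : ℝ} (hT : 0 < T) :
    0 ≤ ∫ ξ in Set.Ioc 0 T, (1 - ξ/T) * Real.cos (ξ*u) := by
  rcases eq_or_ne u 0 with rfl | hu
  · rw [kernel_zero hT]; positivity
  · rw [kernel_eq hT hu]
    apply div_nonneg
    · linarith [Real.cos_le_one (T*u)]
    · positivity

lemma one_sub_cos_lower {x : ℝ} (hx : |x| ≤ 1) : (2/5) * x^2 ≤ 1 - Real.cos x := by
  wlog hx0 : 0 ≤ x generalizing x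
  · have := this (x := -x) (by rwa [abs_neg]) (by linarith [lt_of_not_ge hx0])
    simpa using this
  rcases eq_or_lt_of_le hx0 with rfl | hxpos
  · simp
  · have hx1 : x ≤ 1 := by rwa [abs_of_nonneg hx0] at hx
    have h2 : Real.cos x = 1 - 2 * Real.sin (x/2)^2 := by
      have := Real.cos_sq' (x/2)
      have h2m : Real.cos (2 * (x/2)) = 2 * Real.cos (x/2)^2 - 1 := Real.cos_two_mul (x/2)
      rw [show 2 * (x/2) = x by ring] at h2m
      nlinarith [Real.sin_sq_add_cos_sq (x/2)]
    have hsin : x/2 - (x/2)^3/4 < Real.sin (x/2) := by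
      have := Real.sin_gt_sub_cube (x := x/2) (by linarith)
      nlinarith [pow_pos hxpos 3]
    have hlb : (15/32)*x ≤ Real.sin (x/2) := by
      nlinarith [pow_le_one₀ hx0 hx1 (n := 2), sq_nonneg x]
    have hsin_pos : 0 ≤ Real.sin (x/2) := by nlinarith
    nlinarith [sq_nonneg (Real.sin (x/2) - (15/32)*x)]

lemma kernel_lower {T u : ℝ} (hT : 0 < T) (hu : |T*u| ≤ 1) :
    (2/5) * T ≤ ∫ ξ in Set.Ioc 0 T, (1 - ξ/T) * Real.cos (ξ*u) := by
  rcases eq_or_ne u 0 with rfl | hu0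
  · rw [kernel_zero hT]; linarith
  · rw [kernel_eq hT hu0]
    have h1 := one_sub_cos_lower hu
    rw [le_div_iff₀ (by positivity : (0:ℝ) < T * u^2)]
    nlinarith

lemma conc (μ : Measure ℝ) [IsProbabilityMeasure μ] {s : ℝ} (hs : 0 < s)
    {b : ℝ → ℝ} (hb_int : IntegrableOn b (Set.Ioc 0 (2/s)))
    (hb : ∀ ξ ∈ Set.Ioc (0:ℝ) (2/s), ‖charFn μ ξ‖ ≤ b ξ) :
    (μ (Set.Icc 0 s)).toReal ≤ (5*s/4) * ∫ ξ in Set.Ioc 0 (2/s), b ξ := by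
  set T : ℝ := 2/s with hTdef
  have hT : 0 < T := by positivity
  set c : ℝ := s/2 with hcdef
  set F : ℝ → ℝ → ℝ := fun x ξ => (1 - ξ/T) * Real.cos (ξ*(x - c)) with hFdef
  -- integrability on the product
  have hFmeas : Continuous (Function.uncurry F) := by
    simp only [hFdef, Function.uncurry]
    fun_prop
  have haemem : ∀ᵐ q : ℝ × ℝ ∂(μ.prod (volume.restrict (Set.Ioc 0 T))),
      q.2 ∈ Set.Ioc (0:ℝ) T := by
    rw [ae_iff]
    refine le_antisymm ?_ zero_le
    calc (μ.prod (volume.restrict (Set.Ioc 0 T))) {q : ℝ × ℝ | ¬ q.2 ∈ Set.Ioc (0:ℝ) T}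
        ≤ (μ.prod (volume.restrict (Set.Ioc 0 T))) (Set.univ ×ˢ (Set.Ioc (0:ℝ) T)ᶜ) := by
          apply measure_mono; intro q hq; exact ⟨trivial, hq⟩
      _ = μ Set.univ * (volume.restrict (Set.Ioc 0 T)) (Set.Ioc (0:ℝ) T)ᶜ := by
          rw [Measure.prod_prod]
      _ = 0 := by
          rw [Measure.restrict_apply (measurableSet_Ioc.compl)]
          simp
  have hFint : Integrable (Function.uncurry F) (μ.prod (volume.restrict (Set.Ioc 0 T))) := by
    refine Integrable.mono' (integrable_const 1) hFmeas.aestronglyMeasurable ?_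
    filter_upwards [haemem] with q hq
    have h1 : |1 - q.2/T| ≤ 1 := by
      rw [abs_le]
      constructor
      · have := hq.2; have : q.2/T ≤ 1 := by
          rw [div_le_one hT]; exact hq.2
        linarith
      · have : 0 < q.2/T := div_pos hq.1 hT
        linarith
    calc ‖F q.1 q.2‖ = |1 - q.2/T| * |Real.cos (q.2*(q.1 - c))| := by
          simp [hFdef, abs_mul]
      _ ≤ 1 * 1 := by
          apply mul_le_mul h1 (Real.abs_cos_le_one _) (abs_nonneg _) zero_le_one
      _ = 1 := by norm_num
  have hswap := integral_integral_swap hFint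
  -- κ and its properties
  have hκint : Integrable (fun x => ∫ ξ in Set.Ioc 0 T, F x ξ) μ := hFint.integral_prod_left
  have hκnn : ∀ x : ℝ, 0 ≤ ∫ ξ in Set.Ioc 0 T, F x ξ := fun x => kernel_nonneg hT
  have hlow : (2/5) * T * (μ (Set.Icc 0 s)).toReal ≤ ∫ x, (∫ ξ in Set.Ioc 0 T, F x ξ) ∂μ := by
    have h1 : ∫ x in Set.Icc 0 s, (fun _ => (2/5) * T) x ∂μ
        ≤ ∫ x in Set.Icc 0 s, (∫ ξ in Set.Ioc 0 T, F x ξ) ∂μ := by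
      refine setIntegral_mono_on (integrable_const _).integrableOn
        hκint.integrableOn measurableSet_Icc ?_
      intro x hx
      refine kernel_lower hT ?_
      have h2 : |x - c| ≤ s/2 := by
        rw [abs_le]; constructor <;> [skip; skip] <;>
          · simp only [hcdef]; rcases hx with ⟨h3, h4⟩; linarith
      calc |T * (x - c)| = T * |x - c| := by rw [abs_mul, abs_of_pos hT]
        _ ≤ T * (s/2) := by gcongr
        _ = 1 := by rw [hTdef]; field_simp
    have h2 : ∫ x in Set.Icc 0 s, (fun _ => (2/5) * T) x ∂μ
        = (2/5) * T * (μ (Set.Icc 0 s)).toReal := by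
      rw [setIntegral_const]
      simp [mul_comm, Measure.real]
    rw [h2] at h1
    refine h1.trans (setIntegral_le_integral hκint (Filter.Eventually.of_forall hκnn))
  -- upper bound on the swapped integral
  have hup : ∫ ξ in Set.Ioc 0 T, (∫ x, F x ξ ∂μ) ≤ ∫ ξ in Set.Ioc 0 T, b ξ := by
    refine setIntegral_mono_on hFint.integral_prod_right hb_int measurableSet_Ioc ?_
    intro ξ hξ
    have hfac : 0 ≤ 1 - ξ/T ∧ 1 - ξ/T ≤ 1 := by
      constructor
      · have : ξ/T ≤ 1 := by rw [div_le_one hT]; exact hξ.2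
        linarith
      · have : 0 < ξ/T := div_pos hξ.1 hT
        linarith
    set g : ℝ → ℂ := fun x => Complex.exp (-(Complex.I*ξ*c)) * Complex.exp (Complex.I*ξ*x)
      with hgdef
    have hgnorm : ∀ x : ℝ, ‖g x‖ = 1 := by
      intro x
      simp only [hgdef, norm_mul, Complex.norm_exp]
      simp
    have hgint : Integrable g μ := by
      refine Integrable.mono' (integrable_const 1)
        (Continuous.aestronglyMeasurable (by fun_prop)) ?_
      exact Filter.Eventually.of_forall fun x => le_of_eq (hgnorm x)
    have hre : ∀ x : ℝ, (g x).re = Real.cos (ξ*(x - c)) := by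
      intro x
      have : g x = Complex.exp ((ξ*(x - c) : ℝ) * Complex.I) := by
        show Complex.exp (-(Complex.I*ξ*c)) * Complex.exp (Complex.I*ξ*x) = _
        rw [← Complex.exp_add]
        push_cast
        ring_nf
      rw [this, Complex.exp_ofReal_mul_I_re]
    have hint_eq : ∫ x, F x ξ ∂μ = (1 - ξ/T) * ∫ x, Real.cos (ξ*(x - c)) ∂μ := by
      simp only [hFdef]
      rw [MeasureTheory.integral_const_mul]
    have hcos_eq : ∫ x, Real.cos (ξ*(x - c)) ∂μ
        = (Complex.exp (-(Complex.I*ξ*c)) * charFn μ ξ).re := by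
      have h3 : ∫ x, Real.cos (ξ*(x - c)) ∂μ = ∫ x, (g x).re ∂μ := by
        congr 1; funext x; rw [hre]
      simp_rw [← RCLike.re_to_complex] at h3 ⊢
      rw [h3, integral_re hgint]
      congr 1
      rw [hgdef, charFn]
      exact MeasureTheory.integral_const_mul _ _
    have habs : (Complex.exp (-(Complex.I*ξ*c)) * charFn μ ξ).re ≤ ‖charFn μ ξ‖ := by
      calc (Complex.exp (-(Complex.I*ξ*c)) * charFn μ ξ).re
          ≤ ‖Complex.exp (-(Complex.I*ξ*c)) * charFn μ ξ‖ := Complex.re_le_norm _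
        _ = ‖charFn μ ξ‖ := by
            rw [norm_mul]
            have : ‖Complex.exp (-(Complex.I*ξ*c))‖ = 1 := by
              simp [Complex.norm_exp]
            rw [this, one_mul]
    have hcnn : (0:ℝ) ≤ ‖charFn μ ξ‖ := norm_nonneg _
    calc ∫ x, F x ξ ∂μ = (1 - ξ/T) * (Complex.exp (-(Complex.I*ξ*c)) * charFn μ ξ).re := by
          rw [hint_eq, hcos_eq]
      _ ≤ 1 * ‖charFn μ ξ‖ := by
          rcases le_or_gt (Complex.exp (-(Complex.I*ξ*c)) * charFn μ ξ).re 0 with h | h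
          · calc (1 - ξ/T) * (Complex.exp (-(Complex.I*ξ*c)) * charFn μ ξ).re
                ≤ 0 := mul_nonpos_of_nonneg_of_nonpos hfac.1 h
              _ ≤ 1 * ‖charFn μ ξ‖ := by simpa using hcnn
          · exact mul_le_mul hfac.2 habs h.le zero_le_one
      _ ≤ b ξ := by rw [one_mul]; exact hb ξ hξ
  -- combine
  have hcomb : (2/5) * T * (μ (Set.Icc 0 s)).toReal ≤ ∫ ξ in Set.Ioc 0 T, b ξ := by
    rw [hswap] at hlow
    exact hlow.trans hup
  have hT' : (5*s/4) * ((2/5) * T) = 1 := by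
    rw [hTdef]; field_simp; ring
  calc (μ (Set.Icc 0 s)).toReal = (5*s/4) * ((2/5) * T * (μ (Set.Icc 0 s)).toReal) := by
        rw [← mul_assoc, hT', one_mul]
    _ ≤ (5*s/4) * ∫ ξ in Set.Ioc 0 T, b ξ := by
        have h5 : (0:ℝ) ≤ 5*s/4 := by positivity
        exact mul_le_mul_of_nonneg_left hcomb h5

lemma integrableOn_exp_neg_rpow' {p : ℝ} (hp : 0 < p) :
    IntegrableOn (fun x : ℝ => Real.exp (-x^p)) (Set.Ioi (0:ℝ)) := by
  have h1 : IntegrableOn (fun y : ℝ => y^(1/p - 1) * Real.exp (-y)) (Set.Ioi (0:ℝ)) := by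
    have h := Real.GammaIntegral_convergent (s := 1/p) (by positivity)
    refine h.congr_fun (fun y _ => ?_) measurableSet_Ioi
    ring
  have h2 := (integrableOn_Ioi_comp_rpow_iff'
    (fun y : ℝ => y^(1/p - 1) * Real.exp (-y)) (ne_of_gt hp)).2 h1
  refine h2.congr_fun (fun x hx => ?_) measurableSet_Ioi
  have hx0 : (0:ℝ) < x := hx
  have hxp : (0:ℝ) < x^p := Real.rpow_pos_of_pos hx0 p
  dsimp only
  rw [smul_eq_mul, ← Real.rpow_mul hx0.le, ← mul_assoc, ← Real.rpow_add hx0]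
  have : p - 1 + p * (1/p - 1) = 0 := by field_simp; ring
  rw [this, Real.rpow_zero, one_mul]

lemma integrableOn_exp_neg_mul_rpow' {p b : ℝ} (hp : 0 < p) (hb : 0 < b) :
    IntegrableOn (fun x : ℝ => Real.exp (-b*x^p)) (Set.Ioi (0:ℝ)) := by
  have h0 := integrableOn_exp_neg_rpow' hp
  have hbp : (0:ℝ) < b^(1/p) := Real.rpow_pos_of_pos hb _
  have h1 := (integrableOn_Ioi_comp_mul_left_iff
    (fun x : ℝ => Real.exp (-x^p)) 0 hbp).2 (by simpa using h0)
  refine h1.congr_fun (fun x hx => ?_) measurableSet_Ioi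
  have hx0 : (0:ℝ) < x := hx
  dsimp only
  rw [Real.mul_rpow hbp.le hx0.le, ← Real.rpow_mul hb.le]
  have : 1/p * p = 1 := by field_simp
  rw [this, Real.rpow_one, neg_mul]

lemma tail_integral_le {p : ℝ} (hp : 0 < p) {b : ℝ} (hb : 0 < b) (T : ℝ) :
    ∫ ξ in Set.Ioc (0:ℝ) T, Real.exp (-b*ξ^p)
      ≤ b^(-1/p) * Real.Gamma (1/p + 1) := by
  rw [← integral_exp_neg_mul_rpow hp hb]
  refine setIntegral_mono_set (integrableOn_exp_neg_mul_rpow' hp hb)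
    (Filter.Eventually.of_forall fun x => (Real.exp_pos _).le) ?_
  exact HasSubset.Subset.eventuallyLE Set.Ioc_subset_Ioi_self

end Aux

section Aux2
open Set

variable {α : ℝ} (ψ : Measure ℝ) [IsProbabilityMeasure ψ]

lemma norm_charFn_eq
    (hchar : ∀ ξ : ℝ, charFn ψ ξ =
      Complex.exp (-(|ξ| ^ α : ℝ) * (1 - Complex.I * (Real.tan (π * α / 2) * Real.sign ξ))))
    {ξ : ℝ} (hξ : 0 < ξ) : ‖charFn ψ ξ‖ = Real.exp (-ξ^α) := by
  rw [hchar ξ, Complex.norm_exp]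
  congr 1
  simp only [Complex.mul_re, Complex.mul_im, Complex.neg_re, Complex.neg_im,
    Complex.ofReal_re, Complex.ofReal_im, Complex.sub_re, Complex.sub_im,
    Complex.one_re, Complex.one_im, Complex.I_re, Complex.I_im, abs_of_pos hξ]
  ring

lemma norm_charFn_convPow
    (hchar : ∀ ξ : ℝ, charFn ψ ξ =
      Complex.exp (-(|ξ| ^ α : ℝ) * (1 - Complex.I * (Real.tan (π * α / 2) * Real.sign ξ))))
    (M : ℕ) {ξ : ℝ} (hξ : 0 < ξ) :
    ‖charFn (convPow ψ M) ξ‖ = Real.exp (-(M:ℝ) * ξ^α) := by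
  rw [charFn_convPow ψ ξ M, norm_pow, norm_charFn_eq ψ hchar hξ, ← Real.exp_nat_mul]
  congr 1
  ring

lemma Iic_eq_Icc_null (ν : Measure ℝ) (hneg : ν (Set.Iio 0) = 0) (s : ℝ) :
    ν (Set.Iic s) = ν (Set.Icc 0 s) := by
  refine le_antisymm ?_ (measure_mono fun x hx => hx.2)
  calc ν (Set.Iic s) ≤ ν (Set.Iio 0 ∪ Set.Icc 0 s) := by
        refine measure_mono fun x hx => ?_
        rcases lt_or_ge x 0 with h | h
        · exact Or.inl h
        · exact Or.inr ⟨h, hx⟩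
    _ ≤ ν (Set.Iio 0) + ν (Set.Icc 0 s) := measure_union_le _ _
    _ = ν (Set.Icc 0 s) := by rw [hneg, zero_add]

lemma G_bound (hα : α ∈ Set.Ioo (0:ℝ) 1)
    (hsupp : ψ (Set.Iio 0) = 0)
    (hchar : ∀ ξ : ℝ, charFn ψ ξ =
      Complex.exp (-(|ξ| ^ α : ℝ) * (1 - Complex.I * (Real.tan (π * α / 2) * Real.sign ξ))))
    (M : ℕ) (hM : 0 < M) {s : ℝ} (hs : 0 < s) :
    ((convPow ψ M) (Set.Iic s)).toReal
      ≤ ((5/4) * Real.Gamma (1/α + 1)) * (s * ((M:ℝ))^(-1/α)) := by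
  have : IsProbabilityMeasure (convPow ψ M) := convPow_prob ψ M
  have hM0 : (0:ℝ) < (M:ℝ) := by exact_mod_cast hM
  rw [Iic_eq_Icc_null (convPow ψ M) (convPow_neg ψ hsupp M) s]
  have h1 := conc (convPow ψ M) hs
    (b := fun ξ => Real.exp (-(M:ℝ) * ξ^α))
    ((integrableOn_exp_neg_mul_rpow' hα.1 hM0).mono_set Set.Ioc_subset_Ioi_self)
    (fun ξ hξ => le_of_eq (norm_charFn_convPow ψ hchar M hξ.1))
  refine h1.trans ?_
  have h2 := tail_integral_le hα.1 hM0 (2/s)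
  calc (5*s/4) * ∫ ξ in Set.Ioc (0:ℝ) (2/s), Real.exp (-(M:ℝ) * ξ^α)
      ≤ (5*s/4) * (((M:ℝ))^(-1/α) * Real.Gamma (1/α + 1)) := by
        apply mul_le_mul_of_nonneg_left h2 (by positivity)
    _ = ((5/4) * Real.Gamma (1/α + 1)) * (s * ((M:ℝ))^(-1/α)) := by ring

end Aux2

/-- for the one-sided α-stable pausing time, if `θ_n / n^{1/α} → 0`, then
`f(k, n, t θ_n) → 1` for every integer `k ≥ 2` and `t > 0`. -/
theorem stable_pauseF_limit_sub_scaling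
    (α : ℝ) (hα : α ∈ Set.Ioo (0 : ℝ) 1)
    (ψ : Measure ℝ) [IsProbabilityMeasure ψ]
    (hsupp : ψ (Set.Iio 0) = 0)
    (hchar : ∀ ξ : ℝ, charFn ψ ξ =
      Complex.exp (-(|ξ| ^ α : ℝ) * (1 - Complex.I * (Real.tan (π * α / 2) * Real.sign ξ))))
    (θ : ℕ → ℝ) (hθ : ∀ n, 0 < θ n)
    (hscale : Tendsto (fun n : ℕ => θ n / (n : ℝ) ^ (1 / α)) atTop (𝓝 0))
    (k : ℕ) (hk : 2 ≤ k) (t : ℝ) (ht : 0 < t) :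
    Tendsto (fun n : ℕ => pauseF ψ k n (t * θ n)) atTop (𝓝 1) := by
  obtain ⟨hα0, hα1⟩ := hα
  set D : ℝ := (5/4) * Real.Gamma (1/α + 1) with hD
  have hΓpos : 0 < Real.Gamma (1/α + 1) := Real.Gamma_pos_of_pos (by positivity)
  have hD0 : 0 ≤ D := by positivity
  set sq : ℕ → ℝ := fun n => t * θ n with hsq
  have hs : ∀ n, 0 < sq n := fun n => mul_pos ht (hθ n)
  set b : ℕ → ℝ := fun n => (sq n / (n:ℝ)^(1/α))^α with hbdef
  have hb0 : ∀ n, 0 ≤ b n := fun n =>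
    Real.rpow_nonneg (div_nonneg (hs n).le (Real.rpow_nonneg (Nat.cast_nonneg n) _)) α
  have hbpos : ∀ n : ℕ, 1 ≤ n → 0 < b n := by
    intro n hn
    have hn0 : (0:ℝ) < (n:ℝ) := by exact_mod_cast hn
    exact Real.rpow_pos_of_pos (div_pos (hs n) (Real.rpow_pos_of_pos hn0 _)) α
  have hbto : Tendsto b atTop (𝓝 0) := by
    have h1 : Tendsto (fun n : ℕ => sq n / (n:ℝ)^(1/α)) atTop (𝓝 0) := by
      have := hscale.const_mul t
      simp only [mul_zero] at this
      refine this.congr fun n => ?_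
      simp only [hsq]
      ring
    have h2 : ContinuousAt (fun x : ℝ => x ^ α) 0 :=
      Real.continuousAt_rpow_const 0 α (Or.inr hα0.le)
    have h3 := h2.tendsto.comp h1
    rw [Real.zero_rpow (ne_of_gt hα0)] at h3
    exact h3
  set M : ℕ → ℕ := fun n => ⌈(n:ℝ) * Real.sqrt (b n)⌉₊ + 1 with hMdef
  have hsqrtto : Tendsto (fun n => Real.sqrt (b n)) atTop (𝓝 0) := by
    have := (Real.continuous_sqrt.tendsto 0).comp hbto
    simpa [Function.comp_def] using this
  -- bound A : M n * k / n → 0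
  have hMle : ∀ n : ℕ, (M n : ℝ) ≤ (n:ℝ) * Real.sqrt (b n) + 2 := by
    intro n
    have hx : (0:ℝ) ≤ (n:ℝ) * Real.sqrt (b n) := by positivity
    have h1 : (⌈(n:ℝ) * Real.sqrt (b n)⌉₊ : ℝ) < (n:ℝ) * Real.sqrt (b n) + 1 :=
      Nat.ceil_lt_add_one hx
    have h2 : (M n : ℝ) = (⌈(n:ℝ) * Real.sqrt (b n)⌉₊ : ℝ) + 1 := by
      simp [hMdef]
    linarith
  have hMge : ∀ n : ℕ, (n:ℝ) * Real.sqrt (b n) ≤ (M n : ℝ) := by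
    intro n
    have h1 := Nat.le_ceil ((n:ℝ) * Real.sqrt (b n))
    have h2 : (M n : ℝ) = (⌈(n:ℝ) * Real.sqrt (b n)⌉₊ : ℝ) + 1 := by
      simp [hMdef]
    linarith
  have hA : Tendsto (fun n : ℕ => (M n : ℝ) * k / n) atTop (𝓝 0) := by
    have hupto : Tendsto (fun n : ℕ => Real.sqrt (b n) * k + 2*k/n) atTop (𝓝 0) := by
      have h1 : Tendsto (fun n : ℕ => Real.sqrt (b n) * k) atTop (𝓝 0) := by
        simpa using hsqrtto.mul_const (k:ℝ)
      have h2 : Tendsto (fun n : ℕ => 2*(k:ℝ)/n) atTop (𝓝 0) :=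
        tendsto_const_div_atTop_nhds_zero_nat _
      simpa using h1.add h2
    refine tendsto_of_tendsto_of_tendsto_of_le_of_le' tendsto_const_nhds hupto
      (Filter.Eventually.of_forall fun n => by positivity) ?_
    filter_upwards [eventually_ge_atTop 1] with n hn
    have hn0 : (0:ℝ) < (n:ℝ) := by exact_mod_cast hn
    have h1 : (M n : ℝ) * k / n ≤ ((n:ℝ) * Real.sqrt (b n) + 2) * k / n := by
      gcongr
      exact hMle n
    refine h1.trans (le_of_eq ?_)
    field_simp
  -- bound B : sq n * (M n)^(-1/α) → 0
  have hBked : ∀ n : ℕ, 1 ≤ n → sq n * ((M n : ℝ))^(-1/α) ≤ (Real.sqrt (b n))^(1/α) := by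
    intro n hn
    have hn0 : (0:ℝ) < (n:ℝ) := by exact_mod_cast hn
    have hbn := hbpos n hn
    have hsqrt : 0 < Real.sqrt (b n) := Real.sqrt_pos.2 hbn
    have hx : (0:ℝ) < (n:ℝ) * Real.sqrt (b n) := by positivity
    have hMpos : (0:ℝ) < (M n : ℝ) := lt_of_lt_of_le hx (hMge n)
    have hsa : sq n ^ α = (n:ℝ) * b n := by
      have h1 : b n = sq n ^ α / (n:ℝ) := by
        show (sq n / (n:ℝ)^(1/α))^α = sq n ^ α / (n:ℝ)
        rw [Real.div_rpow (hs n).le (Real.rpow_nonneg (Nat.cast_nonneg n) _),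
          ← Real.rpow_mul (Nat.cast_nonneg n), one_div_mul_cancel (ne_of_gt hα0),
          Real.rpow_one]
      rw [h1]
      field_simp
    have key : sq n / ((n:ℝ) * Real.sqrt (b n))^(1/α) = (Real.sqrt (b n))^(1/α) := by
      have h2 : sq n = (sq n ^ α)^(1/α) := by
        rw [← Real.rpow_mul (hs n).le, mul_one_div_cancel (ne_of_gt hα0), Real.rpow_one]
      rw [h2, ← Real.div_rpow (Real.rpow_nonneg (hs n).le α) hx.le, hsa]
      congr 1
      rw [div_eq_iff (by positivity : ((n:ℝ) * Real.sqrt (b n)) ≠ 0)]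
      nlinarith [Real.mul_self_sqrt (hb0 n)]
    calc sq n * ((M n : ℝ))^(-1/α)
        = sq n / ((M n : ℝ))^(1/α) := by
          rw [neg_div, Real.rpow_neg hMpos.le, div_eq_mul_inv]
          ring
      _ ≤ sq n / ((n:ℝ) * Real.sqrt (b n))^(1/α) := by
          apply div_le_div_of_nonneg_left (hs n).le (Real.rpow_pos_of_pos hx _)
          exact Real.rpow_le_rpow hx.le (hMge n) (by positivity)
      _ = (Real.sqrt (b n))^(1/α) := key
  have hBto : Tendsto (fun n : ℕ => (Real.sqrt (b n))^(1/α)) atTop (𝓝 0) := by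
    have h2 : ContinuousAt (fun x : ℝ => x ^ (1/α)) 0 :=
      Real.continuousAt_rpow_const 0 (1/α) (Or.inr (by positivity : (0:ℝ) ≤ 1/α))
    have h3 := h2.tendsto.comp hsqrtto
    rw [Real.zero_rpow (by positivity : 1/α ≠ 0)] at h3
    exact h3
  have hB : Tendsto (fun n : ℕ => sq n * ((M n : ℝ))^(-1/α)) atTop (𝓝 0) := by
    refine tendsto_of_tendsto_of_tendsto_of_le_of_le' tendsto_const_nhds hBto
      (Filter.Eventually.of_forall fun n => ?_) ?_
    · have h0 : (0:ℝ) ≤ ((M n : ℝ))^(-1/α) := Real.rpow_nonneg (Nat.cast_nonneg _) _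
      exact mul_nonneg (hs n).le h0
    · filter_upwards [eventually_ge_atTop 1] with n hn
      exact hBked n hn
  -- eventual bounds on pauseF
  have key : ∀ᶠ n in atTop,
      1 - (M n : ℝ) * k / n - D * (sq n * ((M n : ℝ))^(-1/α)) ≤ pauseF ψ k n (sq n)
      ∧ pauseF ψ k n (sq n) ≤ 1 := by
    filter_upwards [eventually_ge_atTop k, eventually_ge_atTop 1] with n hnk hn1
    have hn0 : (0:ℝ) < (n:ℝ) := by exact_mod_cast hn1
    set r : ℝ := 1 - (k:ℝ)/n with hrdef
    have hr0 : 0 ≤ r := by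
      have : (k:ℝ)/n ≤ 1 := by
        rw [div_le_one hn0]
        exact_mod_cast hnk
      simp only [hrdef]; linarith
    have hr1 : r ≤ 1 := by
      have : (0:ℝ) ≤ (k:ℝ)/n := by positivity
      simp only [hrdef]; linarith
    set Gf : ℕ → ℝ := fun j => ((convPow ψ j) (Set.Iic (sq n))).toReal with hGf
    set pf : ℕ → ℝ := fun j =>
      ∫ u in Set.Icc (0:ℝ) (sq n), (ψ (Set.Ioi (sq n - u))).toReal ∂(convPow ψ j) with hpf
    have hpauseF : pauseF ψ k n (sq n) = ∑' j : ℕ, r ^ j * pf j := rfl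
    have hpG : ∀ j, pf j = Gf j - Gf (j+1) := fun j =>
      lemmaA ψ hsupp j (sq n) (hs n).le (convPow_neg ψ hsupp j)
    have hp0 : ∀ j, 0 ≤ pf j := fun j =>
      integral_nonneg fun u => ENNReal.toReal_nonneg
    have hG0le : ∀ j, 0 ≤ Gf j := fun j => ENNReal.toReal_nonneg
    have hGle1 : ∀ j, Gf j ≤ 1 := by
      intro j
      have : IsProbabilityMeasure (convPow ψ j) := convPow_prob ψ j
      simp only [hGf]
      exact ENNReal.toReal_le_of_le_ofReal zero_le_one (by simpa using prob_le_one)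
    have hG00 : Gf 0 = 1 := by
      simp only [hGf]
      rw [show convPow ψ 0 = Measure.dirac 0 from rfl,
        Measure.dirac_apply' _ measurableSet_Iic]
      simp [(hs n).le]
    have hsum_range : ∀ N, ∑ j ∈ Finset.range N, pf j = 1 - Gf N := by
      intro N
      have h1 : ∀ j ∈ Finset.range N, pf j = Gf j - Gf (j+1) := fun j _ => hpG j
      rw [Finset.sum_congr rfl h1, Finset.sum_range_sub' Gf N, hG00]
    have hsump : Summable pf := by
      apply summable_of_sum_range_le hp0
      intro N
      rw [hsum_range N]
      linarith [hG0le N]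
    have hterm_le : ∀ j, r ^ j * pf j ≤ pf j := fun j =>
      mul_le_of_le_one_left (hp0 j) (pow_le_one₀ hr0 hr1)
    have hterm_nn : ∀ j, 0 ≤ r ^ j * pf j := fun j =>
      mul_nonneg (pow_nonneg hr0 j) (hp0 j)
    have hsuma : Summable (fun j => r ^ j * pf j) :=
      Summable.of_nonneg_of_le hterm_nn hterm_le hsump
    constructor
    · -- lower bound
      set N := M n with hN
      have h1 : ∑ j ∈ Finset.range N, r ^ j * pf j ≤ pauseF ψ k n (sq n) := by
        rw [hpauseF]
        exact Summable.sum_le_tsum (Finset.range N) (fun j _ => hterm_nn j) hsuma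
      have h2 : r ^ N * (1 - Gf N) ≤ ∑ j ∈ Finset.range N, r ^ j * pf j := by
        rw [← hsum_range N, Finset.mul_sum]
        refine Finset.sum_le_sum fun j hj => ?_
        exact mul_le_mul_of_nonneg_right
          (pow_le_pow_of_le_one hr0 hr1 (le_of_lt (Finset.mem_range.1 hj))) (hp0 j)
      have h3 : r ^ N - Gf N ≤ r ^ N * (1 - Gf N) := by
        have hpow1 : r ^ N ≤ 1 := pow_le_one₀ hr0 hr1
        nlinarith [hG0le N]
      have h4 : 1 - (N:ℝ) * k / n ≤ r ^ N := by
        have hb2 : (-2:ℝ) ≤ -((k:ℝ)/n) := by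
          have : (k:ℝ)/n ≤ 1 := by
            rw [div_le_one hn0]; exact_mod_cast hnk
          linarith
        have := one_add_mul_le_pow hb2 N
        have heq : (1 + -((k:ℝ)/n)) = r := by simp only [hrdef]; ring
        rw [heq] at this
        calc 1 - (N:ℝ) * k / n = 1 + (N:ℝ) * -((k:ℝ)/n) := by ring
          _ ≤ r ^ N := this
      have h5 : Gf N ≤ D * (sq n * ((N:ℝ))^(-1/α)) := by
        have := G_bound ψ ⟨hα0, hα1⟩ hsupp hchar N (Nat.succ_pos _) (hs n)
        calc Gf N ≤ ((5/4) * Real.Gamma (1/α + 1)) * (sq n * ((N:ℝ))^(-1/α)) := this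
          _ = D * (sq n * ((N:ℝ))^(-1/α)) := by rw [hD]
      calc 1 - (M n : ℝ) * k / n - D * (sq n * ((M n : ℝ))^(-1/α))
          ≤ r ^ N - Gf N := by
            have : (1:ℝ) - (N:ℝ) * k / n - D * (sq n * ((N:ℝ))^(-1/α)) ≤ r ^ N - Gf N := by
              linarith
            exact this
        _ ≤ r ^ N * (1 - Gf N) := h3
        _ ≤ ∑ j ∈ Finset.range N, r ^ j * pf j := h2
        _ ≤ pauseF ψ k n (sq n) := h1
    · -- upper bound
      rw [hpauseF]
      calc ∑' j : ℕ, r ^ j * pf j ≤ ∑' j : ℕ, pf j := Summable.tsum_le_tsum hterm_le hsuma hsump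
        _ ≤ 1 := by
            apply Summable.tsum_le_of_sum_range_le hsump
            intro N
            rw [hsum_range N]
            linarith [hG0le N]
  -- squeeze
  have hlowto : Tendsto
      (fun n : ℕ => 1 - (M n : ℝ) * k / n - D * (sq n * ((M n : ℝ))^(-1/α)))
      atTop (𝓝 1) := by
    have h1 := ((tendsto_const_nhds (x := (1:ℝ)) (f := atTop)).sub hA).sub (hB.const_mul D)
    simpa using h1
  refine tendsto_of_tendsto_of_tendsto_of_le_of_le' hlowto tendsto_const_nhds ?_ ?_
  · exact key.mono fun n h => h.1
  · exact key.mono fun n h => h.2
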